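/- For every integer N ≥ 3, Φ(N) = 2 · Σ_{n=1}^{N−1} d_n(nN − n² − 1), where the sum ranges over integers n with 1 ≤ n < N. -/

import Mathlib

open Matrix

def A : Matrix (Fin 2) (Fin 2) ℤ := !![1, 0; 1, 1]

def B : Matrix (Fin 2) (Fin 2) ℤ := !![1, 1; 0, 1]

lemma A_mem : A ∈ Submonoid.closure {A, B} := Submonoid.subset_closure (by simp)
lemma B_mem : B ∈ Submonoid.closure {A, B} := Submonoid.subset_closure (by simp)

lemma closure_nonneg_det {C : Matrix (Fin 2) (Fin 2) ℤ}
    (hC : C ∈ Submonoid.closure {A, B}) :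
    (0 ≤ C 0 0 ∧ 0 ≤ C 0 1 ∧ 0 ≤ C 1 0 ∧ 0 ≤ C 1 1) ∧ C.det = 1 := by
  induction hC using Submonoid.closure_induction with
  | mem x hx =>
    rcases hx with rfl | rfl <;>
      refine ⟨⟨?_, ?_, ?_, ?_⟩, ?_⟩ <;> simp [A, B, Matrix.det_fin_two_of]
  | one => refine ⟨⟨?_, ?_, ?_, ?_⟩, ?_⟩ <;> simp [Matrix.one_apply]
  | mul x y hx hy ihx ihy =>
    obtain ⟨⟨x00, x01, x10, x11⟩, xdet⟩ := ihx
    obtain ⟨⟨y00, y01, y10, y11⟩, ydet⟩ := ihy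
    refine ⟨⟨?_, ?_, ?_, ?_⟩, ?_⟩ <;>
      simp only [Matrix.mul_apply, Fin.sum_univ_two, Matrix.det_mul, xdet, ydet, mul_one] <;>
      positivity

lemma nat_mem_closure : ∀ (s a b c d : ℕ), a + b + c + d = s → a * d = b * c + 1 →
    !![(a : ℤ), (b : ℤ); (c : ℤ), (d : ℤ)] ∈ Submonoid.closure {A, B} := by
  intro s
  induction s using Nat.strong_induction_on with
  | _ s ih =>
  intro a b c d hs hdet
  rcases le_or_gt a c with h1 | h1
  · rcases le_or_gt b d with h2 | h2
    · -- factor out A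
      have hab : 0 < a + b := by
        rcases Nat.eq_zero_or_pos (a + b) with h | h
        · obtain ⟨rfl, rfl⟩ : a = 0 ∧ b = 0 := by omega
          simp at hdet
        · exact h
      have hz : (a : ℤ) * d = b * c + 1 := by exact_mod_cast hdet
      have hdet' : a * (d - b) = b * (c - a) + 1 := by
        zify [h1, h2]; linear_combination hz
      have hmem := ih (a + b + (c - a) + (d - b)) (by omega) a b (c - a) (d - b) rfl hdet'
      have hfac : !![(a : ℤ), (b : ℤ); (c : ℤ), (d : ℤ)] =
          A * !![(a : ℤ), (b : ℤ); ((c - a : ℕ) : ℤ), ((d - b : ℕ) : ℤ)] := by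
        ext i j
        fin_cases i <;> fin_cases j <;>
          simp [A, Matrix.mul_apply, Fin.sum_univ_two] <;> omega
      rw [hfac]
      exact Submonoid.mul_mem _ A_mem hmem
    · -- a ≤ c, d < b : impossible
      exfalso
      have t1 : a * d ≤ c * d := Nat.mul_le_mul_right d h1
      have t2 : d * c ≤ b * c := Nat.mul_le_mul_right c h2.le
      have t3 : c * d = d * c := mul_comm c d
      omega
  · rcases le_or_gt d b with h2 | h2
    · -- factor out B
      have hcd : 0 < c + d := by
        rcases Nat.eq_zero_or_pos (c + d) with h | h
        · obtain ⟨rfl, rfl⟩ : c = 0 ∧ d = 0 := by omega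
          simp at hdet
        · exact h
      have hz : (a : ℤ) * d = b * c + 1 := by exact_mod_cast hdet
      have hdet' : (a - c) * d = (b - d) * c + 1 := by
        zify [h1.le, h2]; linear_combination hz
      have hmem := ih ((a - c) + (b - d) + c + d) (by omega) (a - c) (b - d) c d rfl hdet'
      have hfac : !![(a : ℤ), (b : ℤ); (c : ℤ), (d : ℤ)] =
          B * !![((a - c : ℕ) : ℤ), ((b - d : ℕ) : ℤ); (c : ℤ), (d : ℤ)] := by
        ext i j
        fin_cases i <;> fin_cases j <;>
          simp [B, Matrix.mul_apply, Fin.sum_univ_two] <;> omega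
      rw [hfac]
      exact Submonoid.mul_mem _ B_mem hmem
    · -- c < a, b < d : identity
      have key : (c + 1) * (b + 1) ≤ a * d := Nat.mul_le_mul h1 h2
      have expand : (c + 1) * (b + 1) = b * c + b + c + 1 := by ring
      obtain ⟨rfl, rfl⟩ : b = 0 ∧ c = 0 := by constructor <;> omega
      have had : a = 1 ∧ d = 1 := by
        have ha : a ∣ 1 := Dvd.intro d (by omega)
        have ha1 : a = 1 := Nat.dvd_one.mp ha
        subst ha1; omega
      obtain ⟨rfl, rfl⟩ := had
      have : !![(1 : ℤ), (0 : ℤ); (0 : ℤ), (1 : ℤ)] = 1 := by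
        rw [Matrix.one_fin_two]
      rw [show ((1 : ℕ) : ℤ) = (1 : ℤ) from rfl, show ((0 : ℕ) : ℤ) = (0 : ℤ) from rfl, this]
      exact Submonoid.one_mem _

noncomputable def Phi (N : ℤ) : ℕ :=
  {C : Matrix (Fin 2) (Fin 2) ℤ |
    C ∈ Submonoid.closure {A, B} ∧ Matrix.trace C = N}.ncard

/-- `dLt n x` is the number of positive divisors of `x` that are strictly less
than the real number `n`. -/
noncomputable def dLt (n : ℝ) (x : ℕ) : ℕ :=
  {k : ℕ | k ∣ x ∧ 0 < k ∧ (k : ℝ) < n}.ncard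

def mm (N n : ℕ) : ℕ := n * (N - n) - 1

lemma mm_pos {N n : ℕ} (hN : 3 ≤ N) (h1 : 1 ≤ n) (h2 : n < N) : 0 < mm N n := by
  have ha : n ≤ n * (N - n) := Nat.le_mul_of_pos_right _ (by omega)
  have hb : N - n ≤ n * (N - n) := Nat.le_mul_of_pos_left _ (by omega)
  unfold mm; omega

noncomputable def FF (N : ℕ) : Finset (Matrix (Fin 2) (Fin 2) ℤ) :=
  (Finset.Ico 1 N).biUnion fun n =>
    (mm N n).divisors.image fun (k : ℕ) =>
      !![(n : ℤ), (k : ℤ); ((mm N n / k : ℕ) : ℤ), ((N - n : ℕ) : ℤ)]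

lemma S_eq (N : ℕ) (hN : 3 ≤ N) :
    {C : Matrix (Fin 2) (Fin 2) ℤ |
      C ∈ Submonoid.closure {A, B} ∧ Matrix.trace C = (N : ℤ)} = ↑(FF N) := by
  ext C
  simp only [Set.mem_setOf_eq, FF, Finset.coe_biUnion, Set.mem_iUnion, Finset.mem_coe,
    Finset.mem_image, Finset.mem_Ico, Nat.mem_divisors]
  constructor
  · rintro ⟨hC, htr⟩
    obtain ⟨⟨h00, h01, h10, h11⟩, hdet⟩ := closure_nonneg_det hC
    rw [Matrix.trace_fin_two] at htr
    rw [Matrix.det_fin_two] at hdet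
    obtain ⟨n, ea⟩ := Int.eq_ofNat_of_zero_le h00
    obtain ⟨k, eb⟩ := Int.eq_ofNat_of_zero_le h01
    obtain ⟨c, ec⟩ := Int.eq_ofNat_of_zero_le h10
    obtain ⟨d, ed⟩ := Int.eq_ofNat_of_zero_le h11
    rw [ea, ed] at htr
    rw [ea, eb, ec, ed] at hdet
    have hnd : n + d = N := by exact_mod_cast htr
    have hkc : k * c + 1 = n * d := by
      have : ((k * c + 1 : ℕ) : ℤ) = ((n * d : ℕ) : ℤ) := by push_cast; linarith
      exact_mod_cast this
    have hn1 : 1 ≤ n := by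
      rcases Nat.eq_zero_or_pos n with rfl | h
      · simp at hkc
      · exact h
    have hd1 : 1 ≤ d := by
      rcases Nat.eq_zero_or_pos d with rfl | h
      · simp at hkc
      · exact h
    have hnN : n < N := by omega
    have hdN : d = N - n := by omega
    have hmk : k * c = mm N n := by
      have : n * (N - n) = k * c + 1 := by rw [← hdN, ← hkc]
      unfold mm; omega
    have hmpos : 0 < mm N n := mm_pos hN hn1 hnN
    have hkpos : 0 < k := by
      rcases Nat.eq_zero_or_pos k with rfl | h
      · simp at hmk; omega
      · exact h
    have hkdvd : k ∣ mm N n := ⟨c, hmk.symm⟩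
    refine ⟨n, ⟨hn1, hnN⟩, k, ⟨hkdvd, by omega⟩, ?_⟩
    have hcdiv : (mm N n) / k = c := by
      rw [← hmk, Nat.mul_div_cancel_left c hkpos]
    rw [hcdiv, ← hdN]
    rw [Matrix.eta_fin_two C, ea, eb, ec, ed]
  · rintro ⟨n, ⟨h1, h2⟩, k, ⟨hk, hm0⟩, rfl⟩
    have hmpos : 0 < mm N n := mm_pos hN h1 h2
    have hkpos : 0 < k := Nat.pos_of_dvd_of_pos hk hmpos
    have hdet : n * (N - n) = k * (mm N n / k) + 1 := by
      rw [Nat.mul_div_cancel' hk]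
      unfold mm
      have ha : n ≤ n * (N - n) := Nat.le_mul_of_pos_right _ (by omega)
      omega
    constructor
    · exact nat_mem_closure (n + k + (mm N n / k) + (N - n)) n k (mm N n / k) (N - n) rfl hdet
    · rw [Matrix.trace_fin_two]
      simp
      omega

lemma card_FF (N : ℕ) : (FF N).card = ∑ n ∈ Finset.Ico 1 N, (mm N n).divisors.card := by
  rw [FF, Finset.card_biUnion]
  · refine Finset.sum_congr rfl fun n _ => ?_
    apply Finset.card_image_of_injOn
    intro k1 _ k2 _ h
    have := congrFun (congrFun h 0) 1
    simpa using this
  · intro n1 _ n2 _ hne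
    rw [Function.onFun, Finset.disjoint_left]
    intro x hx1 hx2
    obtain ⟨k1, _, rfl⟩ := Finset.mem_image.mp hx1
    obtain ⟨k2, _, h⟩ := Finset.mem_image.mp hx2
    have := congrFun (congrFun h 0) 0
    simp at this
    exact hne (by exact_mod_cast this.symm)

lemma swap_card (N n : ℕ) (hN : 3 ≤ N) (h1 : 1 ≤ n) (h2 : n < N) :
    ((mm N n).divisors.filter fun k => ¬ k < n).card =
      ((mm N n).divisors.filter fun k => k < N - n).card := by
  have hmpos : 0 < mm N n := mm_pos hN h1 h2
  have hm1 : mm N n + 1 = n * (N - n) := by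
    have ha : n ≤ n * (N - n) := Nat.le_mul_of_pos_right _ (by omega)
    unfold mm; omega
  refine Finset.card_nbij' (fun k => mm N n / k) (fun k => mm N n / k) ?_ ?_ ?_ ?_
  · intro k hk
    simp only [Finset.mem_coe, Finset.mem_filter, Nat.mem_divisors, not_lt] at hk ⊢
    obtain ⟨⟨hkd, hm0⟩, hkn⟩ := hk
    have hkpos : 0 < k := Nat.pos_of_dvd_of_pos hkd hmpos
    refine ⟨⟨Nat.div_dvd_of_dvd hkd, hm0⟩, ?_⟩
    rw [Nat.div_lt_iff_lt_mul hkpos]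
    calc mm N n < n * (N - n) := by omega
    _ ≤ k * (N - n) := Nat.mul_le_mul_right _ hkn
    _ = (N - n) * k := mul_comm _ _
  · intro k hk
    simp only [Finset.mem_coe, Finset.mem_filter, Nat.mem_divisors, not_lt] at hk ⊢
    obtain ⟨⟨hkd, hm0⟩, hkn⟩ := hk
    have hkpos : 0 < k := Nat.pos_of_dvd_of_pos hkd hmpos
    refine ⟨⟨Nat.div_dvd_of_dvd hkd, hm0⟩, ?_⟩
    rw [Nat.le_div_iff_mul_le hkpos]
    have hk' : k ≤ N - n - 1 := by omega
    calc n * k ≤ n * (N - n - 1) := Nat.mul_le_mul_left _ hk'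
    _ = n * (N - n) - n * 1 := by rw [← Nat.mul_sub]
    _ ≤ mm N n := by omega
  · intro k hk
    simp only [Finset.mem_coe, Finset.mem_filter, Nat.mem_divisors] at hk
    exact Nat.div_div_self hk.1.1 hk.1.2
  · intro k hk
    simp only [Finset.mem_coe, Finset.mem_filter, Nat.mem_divisors] at hk
    exact Nat.div_div_self hk.1.1 hk.1.2

lemma mm_symm (N n : ℕ) (h2 : n ≤ N) : mm N (N - n) = mm N n := by
  unfold mm
  rw [Nat.sub_sub_self h2, mul_comm]

lemma sum_swap_eq (N : ℕ) (hN : 3 ≤ N) :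
    ∑ n ∈ Finset.Ico 1 N, ((mm N n).divisors.filter fun k => ¬ k < n).card =
      ∑ n ∈ Finset.Ico 1 N, ((mm N n).divisors.filter fun k => k < n).card := by
  have step1 : ∀ n ∈ Finset.Ico 1 N,
      ((mm N n).divisors.filter fun k => ¬ k < n).card =
        ((mm N (N - n)).divisors.filter fun k => k < N - n).card := by
    intro n hn
    rw [Finset.mem_Ico] at hn
    rw [swap_card N n hN hn.1 hn.2, mm_symm N n hn.2.le]
  rw [Finset.sum_congr rfl step1]
  refine Finset.sum_nbij' (fun n => N - n) (fun n => N - n) ?_ ?_ ?_ ?_ ?_ <;>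
    intro a ha <;> simp only [Finset.mem_Ico] at ha ⊢ <;> omega

lemma dLt_eq (n x : ℕ) (hx : x ≠ 0) :
    dLt (n : ℝ) x = (x.divisors.filter fun k => k < n).card := by
  rw [dLt]
  have : {k : ℕ | k ∣ x ∧ 0 < k ∧ (k : ℝ) < (n : ℝ)} =
      ↑(x.divisors.filter fun k => k < n) := by
    ext k
    simp only [Set.mem_setOf_eq, Finset.coe_filter, Nat.mem_divisors]
    constructor
    · rintro ⟨h1, _, h3⟩
      exact ⟨⟨h1, hx⟩, by exact_mod_cast h3⟩
    · rintro ⟨⟨h1, _⟩, h2⟩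
      exact ⟨h1, Nat.pos_of_dvd_of_pos h1 (Nat.pos_of_ne_zero hx), by exact_mod_cast h2⟩
  rw [this, Set.ncard_coe_finset]

theorem stmt1 (N : ℕ) (hN : 3 ≤ N) :
    Phi (N : ℤ) = 2 * ∑ n ∈ Finset.Ico 1 N, dLt (n : ℝ) (n * N - n ^ 2 - 1) := by
  have hmm : ∀ n, n * N - n ^ 2 - 1 = mm N n := by
    intro n
    unfold mm
    rw [Nat.mul_sub, sq]
  rw [Phi, S_eq N hN, Set.ncard_coe_finset, card_FF N]
  have hsplit : ∀ n ∈ Finset.Ico 1 N, (mm N n).divisors.card =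
      ((mm N n).divisors.filter fun k => k < n).card +
        ((mm N n).divisors.filter fun k => ¬ k < n).card :=
    fun n _ => (Finset.card_filter_add_card_filter_not _).symm
  rw [Finset.sum_congr rfl hsplit, Finset.sum_add_distrib, sum_swap_eq N hN, ← two_mul]
  congr 1
  refine Finset.sum_congr rfl fun n hn => ?_
  rw [Finset.mem_Ico] at hn
  rw [hmm n, dLt_eq n _ (mm_pos hN hn.1 hn.2).ne']
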